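/- Let p̃ = (p̃_1, …, p̃_n) and p be design measures on the design points x_1, …, x_n ∈ ℝ^q such that H(p) is invertible, and let t ∈ [0,1). Then lim_{ε→0+} [(−tr{H((1−ε)p + εp̃)}⁻¹) − (−tr{H(p)}⁻¹)]/ε = Σ_{i=1}^n p̃_i (ψ_{Ai}(p) − tr{H(p)}⁻¹). -/

import Mathlib

open Matrix BigOperators Finset

noncomputable section

/-- A design measure: nonnegative masses summing to 1. -/
def designMeasure {n : ℕ} (p : Fin n → ℝ) : Prop :=
  (∀ i, 0 ≤ p i) ∧ ∑ i, p i = 1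

/-- G(p) = Σ pᵢ xᵢ xᵢᵀ. -/
def Gmat {q n : ℕ} (x : Fin n → Fin q → ℝ) (p : Fin n → ℝ) : Matrix (Fin q) (Fin q) ℝ :=
  ∑ i, p i • Matrix.vecMulVec (x i) (x i)

/-- g(p) = Σ pᵢ xᵢ. -/
def gvec {q n : ℕ} (x : Fin n → Fin q → ℝ) (p : Fin n → ℝ) : Fin q → ℝ :=
  ∑ i, p i • x i

/-- H(p) = G(p) − t g(p) g(p)ᵀ. -/
def Hmat {q n : ℕ} (t : ℝ) (x : Fin n → Fin q → ℝ) (p : Fin n → ℝ) : Matrix (Fin q) (Fin q) ℝ :=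
  Gmat x p - t • Matrix.vecMulVec (gvec x p) (gvec x p)

/-- ψ_{Di}(p). -/
def psiD {q n : ℕ} (t : ℝ) (x : Fin n → Fin q → ℝ) (p : Fin n → ℝ) (i : Fin n) : ℝ :=
  (1 - t) * (x i ⬝ᵥ ((Hmat t x p)⁻¹ *ᵥ x i))
    + t * ((x i - gvec x p) ⬝ᵥ ((Hmat t x p)⁻¹ *ᵥ (x i - gvec x p)))

/-- ψ_{Ai}(p). -/
def psiA {q n : ℕ} (t : ℝ) (x : Fin n → Fin q → ℝ) (p : Fin n → ℝ) (i : Fin n) : ℝ :=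
  (1 - t) * (x i ⬝ᵥ (((Hmat t x p)⁻¹ * (Hmat t x p)⁻¹) *ᵥ x i))
    + t * ((x i - gvec x p) ⬝ᵥ (((Hmat t x p)⁻¹ * (Hmat t x p)⁻¹) *ᵥ (x i - gvec x p)))

end

section auxLemmas
variable {q n : ℕ}

lemma aux_trace_vmv (S : Matrix (Fin q) (Fin q) ℝ) (u v : Fin q → ℝ) :
    Matrix.trace (S * Matrix.vecMulVec u v) = v ⬝ᵥ (S *ᵥ u) := by
  simp only [Matrix.trace, Matrix.diag, Matrix.mul_apply, Matrix.vecMulVec_apply, dotProduct,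
    Matrix.mulVec, Finset.mul_sum]
  exact Finset.sum_congr rfl fun j _ => Finset.sum_congr rfl fun k _ => by ring

lemma aux_dot1 (c : Fin n → ℝ) (v : Fin n → Fin q → ℝ) (u : Fin q → ℝ) :
    (∑ i, c i • v i) ⬝ᵥ u = ∑ i, c i * (v i ⬝ᵥ u) := by
  simp only [dotProduct, Finset.mul_sum]
  rw [Finset.sum_comm]
  refine Finset.sum_congr rfl fun j _ => ?_
  rw [Finset.sum_apply, Finset.sum_mul]
  exact Finset.sum_congr rfl fun i _ => by simp [mul_assoc]

lemma aux_dot2 (c : Fin n → ℝ) (v : Fin n → Fin q → ℝ) (u : Fin q → ℝ) :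
    u ⬝ᵥ (∑ i, c i • v i) = ∑ i, c i * (u ⬝ᵥ v i) := by
  simp only [dotProduct, Finset.mul_sum]
  rw [Finset.sum_comm]
  refine Finset.sum_congr rfl fun j _ => ?_
  rw [Finset.sum_apply, Finset.mul_sum]
  refine Finset.sum_congr rfl fun i _ => by simp; ring

lemma aux_trace_SG (S : Matrix (Fin q) (Fin q) ℝ) (x : Fin n → Fin q → ℝ)
    (r : Fin n → ℝ) :
    Matrix.trace (S * Gmat x r) = ∑ i, r i * (x i ⬝ᵥ (S *ᵥ x i)) := by
  simp only [Gmat, Matrix.mul_sum, Matrix.mul_smul, Matrix.trace_sum, Matrix.trace_smul,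
    aux_trace_vmv, smul_eq_mul]

lemma aux_Gaffine (x : Fin n → Fin q → ℝ) (p p' : Fin n → ℝ) (ε : ℝ) :
    Gmat x ((1 - ε) • p + ε • p') = Gmat x p + ε • (Gmat x p' - Gmat x p) := by
  ext i j
  simp only [Gmat, Matrix.sum_apply, Matrix.add_apply, Matrix.smul_apply, Matrix.sub_apply,
    Pi.add_apply, Pi.smul_apply, smul_eq_mul, Matrix.vecMulVec_apply]
  rw [← Finset.sum_sub_distrib, Finset.mul_sum, ← Finset.sum_add_distrib]
  exact Finset.sum_congr rfl fun k _ => by ring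

lemma aux_gaffine (x : Fin n → Fin q → ℝ) (p p' : Fin n → ℝ) (ε : ℝ) :
    gvec x ((1 - ε) • p + ε • p') = gvec x p + ε • (gvec x p' - gvec x p) := by
  funext j
  simp only [gvec, Finset.sum_apply, Pi.add_apply, Pi.smul_apply, Pi.sub_apply, smul_eq_mul]
  rw [← Finset.sum_sub_distrib, Finset.mul_sum, ← Finset.sum_add_distrib]
  exact Finset.sum_congr rfl fun k _ => by ring

lemma aux_hM (t : ℝ) (x : Fin n → Fin q → ℝ) (p ptilde : Fin n → ℝ) (ε : ℝ) :
    Hmat t x ((1 - ε) • p + ε • ptilde)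
      = Hmat t x p
        + ε • (Gmat x ptilde - Gmat x p
            - t • Matrix.vecMulVec (gvec x p) (gvec x ptilde - gvec x p)
            - t • Matrix.vecMulVec (gvec x ptilde - gvec x p) (gvec x p))
        + ε ^ 2 • ((-t) • Matrix.vecMulVec (gvec x ptilde - gvec x p)
            (gvec x ptilde - gvec x p)) := by
  show Gmat x _ - t • Matrix.vecMulVec (gvec x _) (gvec x _) = _
  rw [aux_Gaffine, aux_gaffine]
  ext i j
  simp only [Hmat, Matrix.add_apply, Matrix.sub_apply, Matrix.smul_apply, Pi.add_apply,
    Pi.smul_apply, Pi.sub_apply, Matrix.vecMulVec_apply, smul_eq_mul]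
  ring

lemma aux_key (t : ℝ) (x : Fin n → Fin q → ℝ) (p ptilde : Fin n → ℝ)
    (hpt : ∑ i, ptilde i = 1) (hHp : IsUnit (Hmat t x p).det) :
    Matrix.trace ((Hmat t x p)⁻¹
        * (Gmat x ptilde - Gmat x p
            - t • Matrix.vecMulVec (gvec x p) (gvec x ptilde - gvec x p)
            - t • Matrix.vecMulVec (gvec x ptilde - gvec x p) (gvec x p))
        * (Hmat t x p)⁻¹)
      = ∑ i, ptilde i * (psiA t x p i - Matrix.trace (Hmat t x p)⁻¹) := by
  set Hi := (Hmat t x p)⁻¹ with hHidef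
  set S := Hi * Hi with hSdef
  set g := gvec x p with hg
  set g' := gvec x ptilde with hg'
  have hSH : S * Hmat t x p = Hi := by
    rw [hSdef, Matrix.mul_assoc, hHidef, Matrix.nonsing_inv_mul _ hHp, Matrix.mul_one]
  have htrHi : Matrix.trace Hi
      = Matrix.trace (S * Gmat x p) - t * (g ⬝ᵥ (S *ᵥ g)) := by
    conv_lhs => rw [← hSH]
    rw [Hmat, Matrix.mul_sub, Matrix.mul_smul, Matrix.trace_sub, Matrix.trace_smul,
      aux_trace_vmv, smul_eq_mul, ← hg]
  rw [Matrix.trace_mul_cycle]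
  rw [Matrix.mul_sub, Matrix.mul_sub, Matrix.mul_sub, Matrix.mul_smul, Matrix.mul_smul,
    Matrix.trace_sub, Matrix.trace_sub, Matrix.trace_sub, Matrix.trace_smul, Matrix.trace_smul,
    aux_trace_vmv, aux_trace_vmv, smul_eq_mul, smul_eq_mul]
  rw [aux_trace_SG, sub_dotProduct, Matrix.mulVec_sub, dotProduct_sub]
  have hb : g' ⬝ᵥ (S *ᵥ g) = ∑ i, ptilde i * (x i ⬝ᵥ (S *ᵥ g)) := by
    rw [hg', gvec, aux_dot1]
  have hd : g ⬝ᵥ (S *ᵥ g') = ∑ i, ptilde i * (g ⬝ᵥ (S *ᵥ x i)) := by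
    rw [Matrix.dotProduct_mulVec, hg', gvec, aux_dot2]
    simp only [← Matrix.dotProduct_mulVec]
  rw [hb, hd]
  simp only [psiA, ← hHidef, ← hSdef, ← hg, htrHi, Matrix.mulVec_sub, sub_dotProduct,
    dotProduct_sub]
  trans (∑ i : Fin n, (ptilde i * (x i ⬝ᵥ S *ᵥ x i) - t * (ptilde i * (x i ⬝ᵥ S *ᵥ g))
      - t * (ptilde i * (g ⬝ᵥ S *ᵥ x i)) - ptilde i * (S * Gmat x p).trace
      + 2 * t * (ptilde i * (g ⬝ᵥ S *ᵥ g))))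
  · simp only [Finset.sum_add_distrib, Finset.sum_sub_distrib, ← Finset.mul_sum,
      ← Finset.sum_mul, hpt]
    ring
  · exact Finset.sum_congr rfl fun i _ => by ring

end auxLemmas

theorem statement_4 {q n : ℕ} (hq : 1 ≤ q) (hn : 1 ≤ n)
    (x : Fin n → Fin q → ℝ) (t : ℝ) (ht0 : 0 ≤ t) (ht1 : t < 1)
    (p ptilde : Fin n → ℝ) (hp : designMeasure p) (hpt : designMeasure ptilde)
    (hHp : IsUnit (Hmat t x p).det) :
    Filter.Tendsto
      (fun ε : ℝ =>
        ((-Matrix.trace ((Hmat t x ((1 - ε) • p + ε • ptilde))⁻¹))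
          - (-Matrix.trace ((Hmat t x p)⁻¹))) / ε)
      (nhdsWithin 0 (Set.Ioi 0))
      (nhds (∑ i, ptilde i * (psiA t x p i - Matrix.trace ((Hmat t x p)⁻¹)))) := by
  letI : SeminormedRing (Matrix (Fin q) (Fin q) ℝ) := Matrix.linftyOpSemiNormedRing
  letI : NormedRing (Matrix (Fin q) (Fin q) ℝ) := Matrix.linftyOpNormedRing
  letI : NormedAlgebra ℝ (Matrix (Fin q) (Fin q) ℝ) := Matrix.linftyOpNormedAlgebra
  haveI : CompleteSpace (Matrix (Fin q) (Fin q) ℝ) := FiniteDimensional.complete ℝ _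
  set A := Hmat t x p with hA
  set B := Gmat x ptilde - Gmat x p
      - t • Matrix.vecMulVec (gvec x p) (gvec x ptilde - gvec x p)
      - t • Matrix.vecMulVec (gvec x ptilde - gvec x p) (gvec x p) with hB
  set C := (-t) • Matrix.vecMulVec (gvec x ptilde - gvec x p) (gvec x ptilde - gvec x p) with hC
  have hMd : HasDerivAt (fun ε : ℝ => Hmat t x ((1 - ε) • p + ε • ptilde)) B 0 := by
    have h1 : HasDerivAt (fun ε : ℝ => ε • B) B 0 := by
      have h := (hasDerivAt_id (0 : ℝ)).smul_const B
      simp only [id, one_smul] at h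
      exact h
    have h2 : HasDerivAt (fun ε : ℝ => ε ^ 2 • C) ((0 : ℝ) • C) 0 := by
      have h := (hasDerivAt_pow 2 (0 : ℝ)).smul_const C
      exact h.congr_deriv (by simp)
    have h3 := ((hasDerivAt_const (0 : ℝ) A).add h1).add h2
    simp only [zero_smul, add_zero, zero_add] at h3
    exact h3.congr_of_eventuallyEq (Filter.Eventually.of_forall fun ε =>
      (aux_hM t x p ptilde ε))
  obtain ⟨u, hu⟩ := (Matrix.isUnit_iff_isUnit_det A).2 hHp
  have hM0 : Hmat t x ((1 - (0:ℝ)) • p + (0:ℝ) • ptilde) = A := by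
    norm_num [hA]
  have h4 : HasDerivAt (fun ε : ℝ => Ring.inverse (Hmat t x ((1 - ε) • p + ε • ptilde)))
      (-(A⁻¹ * B * A⁻¹)) 0 := by
    have h3 := hasFDerivAt_ringInverse (𝕜 := ℝ) u
    rw [hu, ← hM0] at h3
    have h5 := h3.comp_hasDerivAt 0 hMd
    simp [Function.comp_def, ContinuousLinearMap.mulLeftRight_apply, Matrix.coe_units_inv, hu,
      Matrix.mul_assoc] at h5 ⊢
    exact h5
  have h6 : HasDerivAt (fun ε : ℝ => ((Hmat t x ((1 - ε) • p + ε • ptilde))⁻¹ :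
      Matrix (Fin q) (Fin q) ℝ)) (-(A⁻¹ * B * A⁻¹)) 0 := by
    simpa only [Matrix.nonsing_inv_eq_ringInverse] using h4
  have h7 : HasDerivAt (fun ε : ℝ =>
      -Matrix.trace ((Hmat t x ((1 - ε) • p + ε • ptilde))⁻¹))
      (Matrix.trace (A⁻¹ * B * A⁻¹)) 0 := by
    have hτ := ((Matrix.traceLinearMap (Fin q) ℝ ℝ).toContinuousLinearMap.hasFDerivAt
      (x := (Hmat t x ((1 - (0:ℝ)) • p + (0:ℝ) • ptilde))⁻¹)).comp_hasDerivAt 0 h6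
    have := hτ.neg
    simpa [Function.comp_def, Matrix.traceLinearMap_apply, Pi.neg_def,
      LinearMap.coe_toContinuousLinearMap'] using
      this.congr_deriv (g' := Matrix.trace (A⁻¹ * B * A⁻¹)) (by
        show -Matrix.trace (-(A⁻¹ * B * A⁻¹)) = _
        rw [Matrix.trace_neg, neg_neg])
  have hval : Matrix.trace (A⁻¹ * B * A⁻¹)
      = ∑ i, ptilde i * (psiA t x p i - Matrix.trace ((Hmat t x p)⁻¹)) :=
    aux_key t x p ptilde hpt.2 hHp
  rw [← hval]
  have h8 := hasDerivAt_iff_tendsto_slope.mp h7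
  refine (h8.mono_left (nhdsWithin_mono _ fun y hy =>
    Set.mem_compl_singleton_iff.2 (ne_of_gt hy))).congr'
    (Filter.Eventually.of_forall fun ε => ?_)
  simp [slope_def_field, hM0, hA]
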